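/- (Asymmetric Bound) For two devices with duty-cycles η_E, η_F ∈ (0, 1] such that 2/η_E and 2/η_F are positive integers, setting β_E = η_E/(2α), γ_E = η_E/2, β_F = η_F/(2α), γ_F = η_F/2 yields equal one-way latencies L_E = ω/(γ_E·β_F) = L_F = ω/(γ_F·β_E) = 4·α·ω/(η_E·η_F), and this is the minimum of max(L_E, L_F) over all splits β_E ∈ (0, η_E/α), β_F ∈ (0, η_F/α) with γ_E = η_E − α·β_E, γ_F = η_F − α·β_F. -/

import Mathlib

/-- Asymmetric Bound: with `2/η_E` and `2/η_F` positive integers, the split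
`β = η/(2α)`, `γ = η/2` on each device gives equal one-way latencies
`4·α·ω/(η_E·η_F)`, and this is the minimum of `max(L_E, L_F)` over all splits. -/
theorem asymmetric_bound (α ω ηE ηF : ℝ) (hα : 0 < α) (hω : 0 < ω)
    (hηE : ηE ∈ Set.Ioc (0 : ℝ) 1) (hηF : ηF ∈ Set.Ioc (0 : ℝ) 1)
    (hkE : ∃ kE : ℕ, 0 < kE ∧ (2 : ℝ) / ηE = kE)
    (hkF : ∃ kF : ℕ, 0 < kF ∧ (2 : ℝ) / ηF = kF) :
    (ω / ((ηE / 2) * (ηF / (2 * α))) = 4 * α * ω / (ηE * ηF)) ∧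
    (ω / ((ηF / 2) * (ηE / (2 * α))) = 4 * α * ω / (ηE * ηF)) ∧
    (∀ βE ∈ Set.Ioo (0 : ℝ) (ηE / α), ∀ βF ∈ Set.Ioo (0 : ℝ) (ηF / α),
      4 * α * ω / (ηE * ηF) ≤
        max (ω / ((ηE - α * βE) * βF)) (ω / ((ηF - α * βF) * βE))) := by
  obtain ⟨hE0, hE1⟩ := hηE
  obtain ⟨hF0, hF1⟩ := hηF
  refine ⟨by field_simp; ring, by field_simp; ring, ?_⟩
  intro βE hβE βF hβF
  obtain ⟨hβE0, hβE1⟩ := hβE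
  obtain ⟨hβF0, hβF1⟩ := hβF
  have hγE : 0 < ηE - α * βE := by
    linarith [(lt_div_iff₀ hα).mp hβE1]
  have hγF : 0 < ηF - α * βF := by
    linarith [(lt_div_iff₀ hα).mp hβF1]
  set x := (ηE - α * βE) * βF with hx
  set y := (ηF - α * βF) * βE with hy
  have hx0 : 0 < x := mul_pos hγE hβF0
  have hy0 : 0 < y := mul_pos hγF hβE0
  set B := ηE * ηF / (4 * α) with hB
  have hB0 : 0 < B := div_pos (mul_pos hE0 hF0) (by linarith)
  have hxy : x * y ≤ B ^ 2 := by
    have h1 : (ηE - α * βE) * βE ≤ ηE ^ 2 / (4 * α) := by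
      rw [le_div_iff₀ (by linarith)]
      nlinarith [sq_nonneg (ηE - 2 * α * βE)]
    have h2 : (ηF - α * βF) * βF ≤ ηF ^ 2 / (4 * α) := by
      rw [le_div_iff₀ (by linarith)]
      nlinarith [sq_nonneg (ηF - 2 * α * βF)]
    have : x * y = ((ηE - α * βE) * βE) * ((ηF - α * βF) * βF) := by ring
    rw [this]
    have hB2 : B ^ 2 = (ηE ^ 2 / (4 * α)) * (ηF ^ 2 / (4 * α)) := by
      rw [hB]; field_simp
    rw [hB2]
    exact mul_le_mul h1 h2 (by positivity) (by positivity)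
  have key : x ≤ B ∨ y ≤ B := by
    by_contra h
    push_neg at h
    nlinarith [h.1, h.2]
  have hrw : 4 * α * ω / (ηE * ηF) = ω / B := by
    rw [hB]; field_simp
  rw [hrw]
  rcases key with h | h
  · exact le_max_of_le_left (div_le_div_of_nonneg_left hω.le hx0 h)
  · exact le_max_of_le_right (div_le_div_of_nonneg_left hω.le hy0 h)
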